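/- X_{α,θ} = ⋃_{l=0}^{p-1} (e^{iθ})^l K_{α,θ}, where K_{α,θ} is the attractor of the IFS {ψ₁(z)=αz, ψ₂(z)=α e^{iθ} z + α}. -/

import Mathlib

open Complex

/-- e^{iθ} -/
noncomputable def rot (θ : ℝ) : ℂ := Complex.exp (θ * Complex.I)

/-- The digit set Δ_θ = {0, 1, e^{iθ}, …, e^{(p-1)iθ}}. -/
def Delta (θ : ℝ) (p : ℕ) : Set ℂ := insert 0 {z | ∃ k, k < p ∧ z = rot θ ^ k}

/-- Generalized Revolving Condition: each nonzero digit is e^{iθ} times the previous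
nonzero digit. Sequences are indexed from 1; index 0 is a dummy (digit 0). -/
def GRC (θ : ℝ) (δ : ℕ → ℂ) : Prop :=
  ∀ j k : ℕ, j < k → δ j ≠ 0 → δ k ≠ 0 → (∀ m, j < m → m < k → δ m = 0) →
    δ k = rot θ * δ j

/-- Membership in W_θ (with the convention δ 0 = 0, i.e. sequences start at index 1). -/
def Wrev (θ : ℝ) (p : ℕ) (δ : ℕ → ℂ) : Prop :=
  δ 0 = 0 ∧ (∀ n, δ n ∈ Delta θ p) ∧ GRC θ δ

/-- The first nonzero digit of δ is c (or δ is identically zero). -/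
def FirstNonzero (δ : ℕ → ℂ) (c : ℂ) : Prop :=
  (∀ n, δ n = 0) ∨ ∃ j, δ j = c ∧ ∀ m, m < j → δ m = 0

/-- X_c : points from revolving sequences whose first nonzero digit is c. -/
noncomputable def Xc (α : ℂ) (θ : ℝ) (p : ℕ) (c : ℂ) : Set ℂ :=
  {x | ∃ δ : ℕ → ℂ, Wrev θ p δ ∧ FirstNonzero δ c ∧ x = ∑' n, δ n * α ^ n}

/-- X_{α,θ} : points from all revolving sequences. -/
noncomputable def Xfull (α : ℂ) (θ : ℝ) (p : ℕ) : Set ℂ :=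
  {x | ∃ δ : ℕ → ℂ, Wrev θ p δ ∧ x = ∑' n, δ n * α ^ n}



lemma rot_norm (θ : ℝ) : ‖rot θ‖ = 1 := by
  simp [rot, Complex.norm_exp_ofReal_mul_I]

lemma rot_ne (θ : ℝ) : rot θ ≠ 0 := Complex.exp_ne_zero _

lemma rot_pow_p {θ : ℝ} {p : ℕ} (q : ℤ) (hp : 0 < p)
    (hθ : θ = 2 * Real.pi * (q : ℝ) / (p : ℝ)) : rot θ ^ p = 1 := by
  rw [rot, ← Complex.exp_nat_mul]
  have hp' : (p : ℝ) ≠ 0 := Nat.cast_ne_zero.mpr hp.ne'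
  have : (p : ℂ) * ((θ : ℂ) * Complex.I) = (q : ℂ) * (2 * Real.pi * Complex.I) := by
    rw [hθ]
    have hpc : (p : ℂ) ≠ 0 := by exact_mod_cast hp'
    push_cast
    field_simp
  rw [this, Complex.exp_int_mul_two_pi_mul_I]

lemma rot_pow_mem {θ : ℝ} {p : ℕ} (q : ℤ) (hp : 0 < p)
    (hθ : θ = 2 * Real.pi * (q : ℝ) / (p : ℝ)) (k : ℕ) : rot θ ^ k ∈ Delta θ p := by
  have : rot θ ^ k = rot θ ^ (k % p) := by
    conv_lhs => rw [← Nat.div_add_mod k p, pow_add, pow_mul, rot_pow_p q hp hθ, one_pow, one_mul]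
  right
  exact ⟨k % p, Nat.mod_lt _ hp, this⟩

lemma Delta_norm_le {θ : ℝ} {p : ℕ} {z : ℂ} (hz : z ∈ Delta θ p) : ‖z‖ ≤ 1 := by
  rcases hz with h | ⟨k, _, rfl⟩
  · simp [h]
  · rw [norm_pow, rot_norm, one_pow]


/-- number of `true`s among `b 0, …, b (n-1)` -/
def cnt (b : ℕ → Bool) (n : ℕ) : ℕ := ((Finset.range n).filter (fun m => b m = true)).card

lemma cnt_succ (b : ℕ → Bool) (n : ℕ) :
    cnt b (n + 1) = cnt b n + (if b n then 1 else 0) := by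
  unfold cnt
  rw [Finset.range_add_one, Finset.filter_insert]
  by_cases h : b n
  · rw [if_pos h, Finset.card_insert_of_notMem (by simp)]
    simp [h]
  · simp [h]

lemma cnt_succ_true {b : ℕ → Bool} {n : ℕ} (h : b n = true) : cnt b (n+1) = cnt b n + 1 := by
  simp [cnt_succ, h]

lemma cnt_succ_false {b : ℕ → Bool} {n : ℕ} (h : b n = false) : cnt b (n+1) = cnt b n := by
  simp [cnt_succ, h]

lemma cnt_congr {b : ℕ → Bool} {a n : ℕ} (hle : a ≤ n)
    (h : ∀ l, a ≤ l → l < n → b l = false) : cnt b n = cnt b a := by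
  induction n with
  | zero => rw [Nat.le_zero.mp hle]
  | succ n ih =>
    rcases Nat.lt_or_ge a (n+1) with hlt | hge
    · have han : a ≤ n := Nat.lt_succ_iff.mp hlt
      rw [cnt_succ_false (h n han (Nat.lt_succ_self n)), ih han (fun l h1 h2 => h l h1 (h2.trans (Nat.lt_succ_self n)))]
    · have : a = n + 1 := le_antisymm hle hge
      rw [this]

lemma cnt_zero_of_false {b : ℕ → Bool} {n : ℕ} (h : ∀ l, l < n → b l = false) :
    cnt b n = 0 := by
  have := cnt_congr (Nat.zero_le n) (fun l _ h2 => h l h2)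
  simpa [cnt] using this

/-- digit sequence coded by a binary sequence `b` -/
noncomputable def dig (θ : ℝ) (b : ℕ → Bool) : ℕ → ℂ
  | 0 => 0
  | (n+1) => if b n then rot θ ^ (cnt b n) else 0

lemma dig_succ_true {θ : ℝ} {b : ℕ → Bool} {n : ℕ} (h : b n = true) :
    dig θ b (n+1) = rot θ ^ (cnt b n) := by simp [dig, h]

lemma dig_succ_false {θ : ℝ} {b : ℕ → Bool} {n : ℕ} (h : b n = false) :
    dig θ b (n+1) = 0 := by simp [dig, h]

lemma dig_ne_zero_iff {θ : ℝ} {b : ℕ → Bool} {n : ℕ} :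
    dig θ b (n+1) ≠ 0 ↔ b n = true := by
  rcases Bool.eq_false_or_eq_true (b n) with h | h
  · simp [dig_succ_true h, h, pow_ne_zero _ (rot_ne θ)]
  · simp [dig_succ_false h, h]

lemma dig_mem_Delta {θ : ℝ} {p : ℕ} (q : ℤ) (hp : 0 < p)
    (hθ : θ = 2 * Real.pi * (q : ℝ) / (p : ℝ)) (b : ℕ → Bool) (n : ℕ) :
    dig θ b n ∈ Delta θ p := by
  match n with
  | 0 => exact Or.inl rfl
  | (n+1) =>
    rcases Bool.eq_false_or_eq_true (b n) with h | h
    · rw [dig_succ_true h]; exact rot_pow_mem q hp hθ _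
    · rw [dig_succ_false h]; exact Or.inl rfl

lemma dig_GRC (θ : ℝ) (b : ℕ → Bool) : GRC θ (dig θ b) := by
  intro j k hjk hj hk hmid
  match j, k with
  | 0, _ => exact absurd rfl hj
  | (m+1), 0 => omega
  | (m+1), (n+1) =>
    have hbm : b m = true := dig_ne_zero_iff.mp hj
    have hbn : b n = true := dig_ne_zero_iff.mp hk
    have hmn : m + 1 ≤ n := by omega
    have hmidb : ∀ l, m + 1 ≤ l → l < n → b l = false := by
      intro l h1 h2
      have := hmid (l+1) (by omega) (by omega)
      by_contra hb
      exact (dig_ne_zero_iff.mpr (Bool.not_eq_false _ ▸ Bool.of_not_eq_false hb)) this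
    have hcnt : cnt b n = cnt b m + 1 := by
      rw [cnt_congr hmn hmidb, cnt_succ_true hbm]
    rw [dig_succ_true hbm, dig_succ_true hbn, hcnt, pow_succ, mul_comm]

lemma dig_first (θ : ℝ) (b : ℕ → Bool) : FirstNonzero (dig θ b) 1 := by
  by_cases h : ∃ n, b n = true
  · right
    classical
    refine ⟨Nat.find h + 1, ?_, ?_⟩
    · rw [dig_succ_true (Nat.find_spec h),
        cnt_zero_of_false (fun l hl => Bool.eq_false_iff.mpr (fun hb => Nat.find_min h hl hb)), pow_zero]
    · intro m hm
      match m with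
      | 0 => rfl
      | (l+1) =>
        exact dig_succ_false (Bool.eq_false_iff.mpr (fun hb => Nat.find_min h (by omega) hb))
  · left
    intro n
    match n with
    | 0 => rfl
    | (l+1) =>
      exact dig_succ_false (Bool.eq_false_iff.mpr (fun hb => h ⟨l, hb⟩))

/-- apply the maps coded by `b 0, …, b (N-1)` (b 0 outermost) to `y` -/
noncomputable def code (α : ℂ) (θ : ℝ) (b : ℕ → Bool) : ℕ → ℂ → ℂ
  | 0, y => y
  | (N+1), y => code α θ b N (if b N then α * rot θ * y + α else α * y)

lemma code_formula (α : ℂ) (θ : ℝ) (b : ℕ → Bool) (N : ℕ) (y : ℂ) :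
    code α θ b N y =
      (∑ n ∈ Finset.range (N+1), dig θ b n * α ^ n) + α ^ N * rot θ ^ (cnt b N) * y := by
  induction N generalizing y with
  | zero => simp [code, dig, cnt]
  | succ N ih =>
    show code α θ b N _ = _
    rw [ih]
    rcases Bool.eq_false_or_eq_true (b N) with h | h
    · rw [if_pos h, Finset.sum_range_succ _ (N+1), dig_succ_true h, cnt_succ_true h]
      ring
    · rw [if_neg (by simp [h]), Finset.sum_range_succ _ (N+1), dig_succ_false h, cnt_succ_false h]
      ring

lemma code_mem {α : ℂ} {θ : ℝ} {K : Set ℂ}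
    (hK : K = (fun z => α * z) '' K ∪ (fun z => α * rot θ * z + α) '' K)
    (b : ℕ → Bool) (N : ℕ) {y : ℂ} (hy : y ∈ K) : code α θ b N y ∈ K := by
  induction N generalizing y with
  | zero => exact hy
  | succ N ih =>
    show code α θ b N _ ∈ K
    apply ih
    rcases Bool.eq_false_or_eq_true (b N) with h | h
    · rw [if_pos h, hK]; exact Or.inr ⟨y, hy, rfl⟩
    · rw [if_neg (by simp [h]), hK]; exact Or.inl ⟨y, hy, rfl⟩

lemma summable_digits {α : ℂ} (hα : ‖α‖ < 1) {δ : ℕ → ℂ} (hδ : ∀ n, ‖δ n‖ ≤ 1) :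
    Summable (fun n => δ n * α ^ n) := by
  apply Summable.of_norm_bounded (summable_geometric_of_lt_one (norm_nonneg α) hα)
  intro n
  rw [norm_mul, norm_pow]
  calc ‖δ n‖ * ‖α‖ ^ n ≤ 1 * ‖α‖ ^ n := by
        exact mul_le_mul_of_nonneg_right (hδ n) (by positivity)
    _ = ‖α‖ ^ n := one_mul _

lemma dig_norm_le (θ : ℝ) (b : ℕ → Bool) (n : ℕ) : ‖dig θ b n‖ ≤ 1 := by
  match n with
  | 0 => simp [dig]
  | (n+1) =>
    rcases Bool.eq_false_or_eq_true (b n) with h | h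
    · rw [dig_succ_true h, norm_pow, rot_norm, one_pow]
    · rw [dig_succ_false h]; simp

lemma tendsto_partial (α : ℂ) {θ : ℝ} {b : ℕ → Bool} (hα : ‖α‖ < 1) :
    Filter.Tendsto (fun N => ∑ n ∈ Finset.range (N+1), dig θ b n * α ^ n)
      Filter.atTop (nhds (∑' n, dig θ b n * α ^ n)) := by
  have hs : Summable (fun n => dig θ b n * α ^ n) := summable_digits hα (dig_norm_le θ b)
  exact (hs.hasSum.tendsto_sum_nat).comp (Filter.tendsto_add_atTop_nat 1)

lemma tail_tendsto_zero {α : ℂ} (hα : ‖α‖ < 1) {θ : ℝ} {b : ℕ → Bool} {y : ℕ → ℂ} {C : ℝ}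
    (hy : ∀ N, ‖y N‖ ≤ C) :
    Filter.Tendsto (fun N => α ^ N * rot θ ^ (cnt b N) * y N) Filter.atTop (nhds 0) := by
  rw [tendsto_zero_iff_norm_tendsto_zero]
  have h1 : Filter.Tendsto (fun N => ‖α‖ ^ N * C) Filter.atTop (nhds 0) := by
    simpa using (tendsto_pow_atTop_nhds_zero_of_lt_one (norm_nonneg α) hα).mul_const C
  apply squeeze_zero (fun N => norm_nonneg _) _ h1
  intro N
  rw [norm_mul, norm_mul, norm_pow, norm_pow, rot_norm, one_pow, mul_one]
  exact mul_le_mul_of_nonneg_left (hy N) (by positivity)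

lemma tsum_dig_mem {α : ℂ} {θ : ℝ} {K : Set ℂ} (hα : ‖α‖ < 1)
    (hKne : K.Nonempty) (hKc : IsCompact K)
    (hK : K = (fun z => α * z) '' K ∪ (fun z => α * rot θ * z + α) '' K)
    (b : ℕ → Bool) : (∑' n, dig θ b n * α ^ n) ∈ K := by
  obtain ⟨y₀, hy₀⟩ := hKne
  have hT : Filter.Tendsto (fun N => code α θ b N y₀) Filter.atTop
      (nhds (∑' n, dig θ b n * α ^ n)) := by
    have := (tendsto_partial α hα (θ := θ) (b := b)).add
      (tail_tendsto_zero hα (θ := θ) (b := b) (y := fun _ => y₀) (C := ‖y₀‖) (fun _ => le_refl _))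
    rw [add_zero] at this
    convert this using 2 with N
    exact code_formula α θ b N y₀
  exact hKc.isClosed.mem_of_tendsto hT (Filter.Eventually.of_forall (fun N => code_mem hK b N hy₀))

lemma mem_K_exists_code {α : ℂ} {θ : ℝ} {K : Set ℂ} (hα : ‖α‖ < 1)
    (hKc : IsCompact K)
    (hK : K = (fun z => α * z) '' K ∪ (fun z => α * rot θ * z + α) '' K)
    {x : ℂ} (hx : x ∈ K) : ∃ b : ℕ → Bool, x = ∑' n, dig θ b n * α ^ n := by
  have hstep : ∀ z ∈ K, ∃ c : Bool, ∃ w, w ∈ K ∧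
      z = (if c then α * rot θ * w + α else α * w) := by
    intro z hz
    rw [hK] at hz
    rcases hz with ⟨w, hw, hwz⟩ | ⟨w, hw, hwz⟩
    · exact ⟨false, w, hw, by simpa using hwz.symm⟩
    · exact ⟨true, w, hw, by simpa using hwz.symm⟩
  choose c w hwK hrec using hstep
  let u : ℕ → {z // z ∈ K} := fun N =>
    Nat.rec ⟨x, hx⟩ (fun _ z => ⟨w z.1 z.2, hwK z.1 z.2⟩) N
  set b : ℕ → Bool := fun N => c (u N).1 (u N).2 with hb
  have hcode : ∀ N, x = code α θ b N (u N).1 := by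
    intro N
    induction N with
    | zero => rfl
    | succ N ih =>
      show x = code α θ b N _
      have hu : (u (N+1)).1 = w (u N).1 (u N).2 := rfl
      rw [hu, ← hrec (u N).1 (u N).2]
      exact ih
  obtain ⟨C, hC⟩ := hKc.isBounded.exists_norm_le
  have hTx : Filter.Tendsto (fun N => ∑ n ∈ Finset.range (N+1), dig θ b n * α ^ n)
      Filter.atTop (nhds x) := by
    have h2 : Filter.Tendsto (fun N => x - α ^ N * rot θ ^ (cnt b N) * (u N).1)
        Filter.atTop (nhds x) := by
      have := (tendsto_const_nhds (x := x) (f := Filter.atTop (α := ℕ))).sub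
        (tail_tendsto_zero hα (θ := θ) (b := b) (y := fun N => (u N).1) (C := C)
          (fun N => hC _ (u N).2))
      simpa using this
    convert h2 using 2 with N
    have := hcode N
    rw [code_formula] at this
    linear_combination -this
  exact ⟨b, tendsto_nhds_unique hTx (tendsto_partial α hα)⟩


lemma eq_dig {θ : ℝ} {p : ℕ} {δ : ℕ → ℂ} (hw : Wrev θ p δ)
    (hf : ∀ j, δ j ≠ 0 → (∀ m, m < j → δ m = 0) → δ j = 1) :
    ∃ b : ℕ → Bool, δ = dig θ b := by
  classical
  set b : ℕ → Bool := fun n => decide (δ (n+1) ≠ 0) with hbdef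
  have hb : ∀ n, b n = true ↔ δ (n+1) ≠ 0 := by
    intro n; simp [hbdef]
  have hbf : ∀ n, b n = false ↔ δ (n+1) = 0 := by
    intro n
    rw [← Bool.not_eq_true, hb n, not_not]
  have claim : ∀ n, δ (n+1) ≠ 0 → δ (n+1) = rot θ ^ (cnt b n) := by
    intro n
    induction n using Nat.strong_induction_on with
    | _ n ih =>
      intro hne
      by_cases hprev : ∃ m, m ≤ n ∧ δ m ≠ 0
      · obtain ⟨m0, hm0n, hm0⟩ := hprev
        obtain ⟨m, hPm, hmn, hmax⟩ :
            ∃ m, δ m ≠ 0 ∧ m ≤ n ∧ ∀ l, m < l → l ≤ n → δ l = 0 := by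
          refine ⟨Nat.findGreatest (fun m => δ m ≠ 0) n,
            Nat.findGreatest_spec (P := fun m => δ m ≠ 0) hm0n hm0, Nat.findGreatest_le n, ?_⟩
          intro l h1 h2
          by_contra hc
          exact Nat.findGreatest_is_greatest h1 h2 hc
        have hm1 : m ≠ 0 := by
          intro h0
          exact hPm (h0 ▸ hw.1)
        obtain ⟨m', rfl⟩ := Nat.exists_eq_succ_of_ne_zero hm1
        have hgrc := hw.2.2 (m'+1) (n+1) (by omega) hPm hne
          (fun l h1 h2 => hmax l h1 (by omega))
        have hih := ih m' (by omega) hPm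
        have hcnt : cnt b n = cnt b m' + 1 := by
          rw [cnt_congr (a := m'+1) (by omega)
            (fun l h1 h2 => (hbf l).mpr (hmax (l+1) (by omega) (by omega))),
            cnt_succ_true ((hb m').mpr hPm)]
        rw [hgrc, hih, hcnt, pow_succ, mul_comm]
      · push_neg at hprev
        have h1 : δ (n+1) = 1 := hf (n+1) hne (fun m hm => hprev m (by omega))
        have hcnt : cnt b n = 0 :=
          cnt_zero_of_false (fun l hl => (hbf l).mpr (hprev (l+1) (by omega)))
        rw [h1, hcnt, pow_zero]
  refine ⟨b, funext fun n => ?_⟩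
  match n with
  | 0 => exact hw.1
  | (n+1) =>
    by_cases hne : δ (n+1) = 0
    · rw [hne, dig_succ_false ((hbf n).mpr hne)]
    · rw [claim n hne, dig_succ_true ((hb n).mpr hne)]

lemma wrev_rot_smul {θ : ℝ} {p : ℕ} (q : ℤ) (hp : 0 < p)
    (hθ : θ = 2 * Real.pi * (q : ℝ) / (p : ℝ)) {δ : ℕ → ℂ} (hw : Wrev θ p δ) (s : ℕ) :
    Wrev θ p (fun n => rot θ ^ s * δ n) := by
  refine ⟨by simp [hw.1], fun n => ?_, ?_⟩
  · rcases hw.2.1 n with h | ⟨k, hk, h⟩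
    · simp [h, Delta]
    · show rot θ ^ s * δ n ∈ Delta θ p
      rw [h, ← pow_add]
      exact rot_pow_mem q hp hθ _
  · intro j k hjk hj hk hmid
    have hδj : δ j ≠ 0 := fun h => hj (by simp [h])
    have hδk : δ k ≠ 0 := fun h => hk (by simp [h])
    have := hw.2.2 j k hjk hδj hδk (fun m h1 h2 => by
      have := hmid m h1 h2
      simpa [pow_ne_zero _ (rot_ne θ)] using this)
    show rot θ ^ s * δ k = rot θ * (rot θ ^ s * δ j)
    rw [this]; ring

lemma tsum_rot_smul (α : ℂ) (θ : ℝ) (s : ℕ) (δ : ℕ → ℂ) :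
    ∑' n, (rot θ ^ s * δ n) * α ^ n = rot θ ^ s * ∑' n, δ n * α ^ n := by
  rw [show (fun n => (rot θ ^ s * δ n) * α ^ n) = fun n => rot θ ^ s * (δ n * α ^ n)
    from funext fun n => mul_assoc _ _ _, tsum_mul_left]



/-- X_{α,θ} = ⋃_{l=0}^{p-1} (e^{iθ})^l K_{α,θ}. -/
theorem Xfull_eq_union_rot_attractor (α : ℂ) (θ : ℝ) (p : ℕ) (q : ℤ) (hp : 0 < p)
    (hq : Nat.Coprime q.natAbs p)
    (hθ : θ = 2 * Real.pi * (q : ℝ) / (p : ℝ)) (hα0 : 0 < ‖α‖) (hα : ‖α‖ < 1)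
    (K : Set ℂ) (hKne : K.Nonempty) (hKc : IsCompact K)
    (hK : K = (fun z => α * z) '' K ∪ (fun z => α * rot θ * z + α) '' K) :
    Xfull α θ p = ⋃ l ∈ Finset.range p, (fun z => rot θ ^ l * z) '' K := by
  classical
  have hrotp : rot θ ^ p = 1 := rot_pow_p q hp hθ
  ext x
  simp only [Xfull, Set.mem_setOf_eq, Set.mem_iUnion, Finset.mem_range, Set.mem_image]
  constructor
  · rintro ⟨δ, hw, rfl⟩
    by_cases hz : ∀ n, δ n = 0
    · refine ⟨0, hp, ∑' n, dig θ (fun _ => false) n * α ^ n,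
        tsum_dig_mem hα hKne hKc hK _, ?_⟩
      have h1 : ∀ n, dig θ (fun _ => false) n * α ^ n = 0 := by
        intro n
        match n with
        | 0 => simp [dig]
        | (n+1) => simp [dig]
      have h2 : ∀ n, δ n * α ^ n = 0 := fun n => by simp [hz n]
      simp only [h1, h2, tsum_zero, mul_zero]
    · push_neg at hz
      have hj := Nat.find_spec hz
      set j := Nat.find hz with hjdef
      have hjmin : ∀ m, m < j → δ m = 0 := fun m hm => by
        by_contra hc; exact Nat.find_min hz hm hc
      rcases hw.2.1 j with h0 | ⟨k, hk, hjk⟩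
      · exact absurd h0 hj
      have hkp : k ≤ p := hk.le
      set δ' : ℕ → ℂ := fun n => rot θ ^ (p - k) * δ n with hδ'
      have hw' : Wrev θ p δ' := wrev_rot_smul q hp hθ hw (p - k)
      have hδ'j : δ' j = 1 := by
        rw [hδ']
        simp only []
        rw [hjk, ← pow_add]
        rw [show p - k + k = p by omega, hrotp]
      have hf : ∀ i, δ' i ≠ 0 → (∀ m, m < i → δ' m = 0) → δ' i = 1 := by
        intro i hi hmin
        have hij : i = j := by
          rcases Nat.lt_trichotomy i j with h | h | h
          · exact absurd (by simp [hδ', hjmin i h]) hi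
          · exact h
          · exact absurd (hmin j h) (by rw [hδ'j]; exact one_ne_zero)
        rw [hij, hδ'j]
      obtain ⟨b, hbeq⟩ := eq_dig hw' hf
      refine ⟨k, hk, ∑' n, δ' n * α ^ n, ?_, ?_⟩
      · rw [hbeq]; exact tsum_dig_mem hα hKne hKc hK b
      · rw [hδ', tsum_rot_smul, ← mul_assoc, ← pow_add, show k + (p - k) = p by omega, hrotp,
          one_mul]
  · rintro ⟨l, hl, z, hzK, rfl⟩
    obtain ⟨b, hb⟩ := mem_K_exists_code hα hKc hK hzK
    refine ⟨fun n => rot θ ^ l * dig θ b n, ?_, ?_⟩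
    · exact wrev_rot_smul q hp hθ ⟨rfl, dig_mem_Delta q hp hθ b, dig_GRC θ b⟩ l
    · rw [tsum_rot_smul, ← hb]
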